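/- For a finite undirected simple graph G=(V,E) and an orientation Ḡ of G satisfying Invariant 2 (there is no improving path starting at any vertex of maximum out-degree), the maximum out-degree Δ of Ḡ is optimal; that is, every orientation of G has maximum out-degree at least Δ. -/

import Mathlib

open Finset

/-- An orientation of a simple graph `G`: a choice, for each edge `{u,v}` of `G`,
of exactly one of the directed edges `(u,v)`, `(v,u)`. -/
structure GraphOrientation {V : Type*} (G : SimpleGraph V) where
  dir : V → V → Bool
  dir_adj : ∀ u v, dir u v = true → G.Adj u v
  exactly_one : ∀ u v, G.Adj u v → (dir u v = true ↔ ¬ dir v u = true)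

/-- Out-degree of `v` w.r.t. a directed-edge relation `d`. -/
def outDegF {V : Type*} [Fintype V] (d : V → V → Bool) (v : V) : ℕ :=
  (Finset.univ.filter fun w => d v w = true).card

/-- Out-degree of a vertex in an orientation. -/
def GraphOrientation.outDeg {V : Type*} [Fintype V] {G : SimpleGraph V}
    (o : GraphOrientation G) (v : V) : ℕ := outDegF o.dir v

/-- Maximum out-degree `Δ` of an orientation. -/
def GraphOrientation.maxOutDeg {V : Type*} [Fintype V] {G : SimpleGraph V}
    (o : GraphOrientation G) : ℕ := Finset.univ.sup o.outDeg

/-- `|E(S)|`: the number of edges of `G` with both endpoints in `S`. -/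
def edgeCount {V : Type*} [Fintype V] [DecidableEq V] (G : SimpleGraph V)
    [DecidableRel G.Adj] (S : Finset V) : ℕ :=
  (G.edgeFinset.filter fun e => ∀ x ∈ e, x ∈ S).card

/-- A directed path in an orientation: a list of distinct vertices, of length at
least two (i.e. `k ≥ 1` edges), with consecutive vertices joined by directed edges. -/
def IsDirPath {V : Type*} {G : SimpleGraph V} (o : GraphOrientation G) (p : List V) : Prop :=
  p.Nodup ∧ 2 ≤ p.length ∧ List.Chain' (fun a b => o.dir a b = true) p

/-- A directed path from `a` to `b`. -/
def IsPathFrom {V : Type*} {G : SimpleGraph V} (o : GraphOrientation G)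
    (p : List V) (a b : V) : Prop :=
  IsDirPath o p ∧ p.head? = some a ∧ p.getLast? = some b

/-- Invariant 1: there is no improving path between any two vertices, i.e. no directed
path `⟨a,…,b⟩` with `odeg(a) > odeg(b) + 1`. -/
def Invariant1 {V : Type*} [Fintype V] {G : SimpleGraph V} (o : GraphOrientation G) : Prop :=
  ∀ p a b, IsPathFrom o p a b → o.outDeg a ≤ o.outDeg b + 1

/-- Invariant 2: there is no improving path starting at a vertex of maximum out-degree. -/
def Invariant2 {V : Type*} [Fintype V] {G : SimpleGraph V} (o : GraphOrientation G) : Prop :=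
  ∀ p a b, IsPathFrom o p a b → o.outDeg a = o.maxOutDeg → o.outDeg a ≤ o.outDeg b + 1

/-- Flipping the directed path `p`: every directed edge `(v_i, v_{i+1})` of `p`
is replaced by the reversed edge `(v_{i+1}, v_i)`; all other edges are unchanged. -/
def flipDir {V : Type*} [DecidableEq V] (d : V → V → Bool) (p : List V) : V → V → Bool :=
  fun a b => if (a, b) ∈ p.zip p.tail ∨ (b, a) ∈ p.zip p.tail then d b a else d a b

/-- `G + {u,v}`: the graph obtained from `G` by inserting the edge `{u,v}`. -/
def addE {V : Type*} (G : SimpleGraph V) (u v : V) : SimpleGraph V :=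
  G ⊔ SimpleGraph.fromEdgeSet {s(u, v)}

/-- `G − {u,v}`: the graph obtained from `G` by deleting the edge `{u,v}`. -/
def delE {V : Type*} (G : SimpleGraph V) (u v : V) : SimpleGraph V :=
  G.deleteEdges {s(u, v)}

/-- An orientation satisfying Invariant 2 (no improving path starting at a
vertex of maximum out-degree) has optimal maximum out-degree: every orientation of `G`
has maximum out-degree at least `Δ(Ḡ)`. -/

lemma reach_path {V : Type*} {G : SimpleGraph V} (o : GraphOrientation G) (m v : V)
    (h : Relation.ReflTransGen (fun a b => o.dir a b = true) m v) :
    v = m ∨ ∃ p, IsPathFrom o p m v := by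
  classical
  induction h with
  | refl => exact Or.inl rfl
  | @tail b c hmb hbc ih =>
    rcases ih with rfl | ⟨p, ⟨⟨hnd, hlen, hch⟩, hhead, hlast⟩⟩
    · right
      refine ⟨[b, c], ⟨⟨?_, by simp, ?_⟩, rfl, rfl⟩⟩
      · simp [(o.dir_adj _ _ hbc).ne]
      · exact List.isChain_pair.2 hbc
    · by_cases hc : c ∈ p
      · obtain ⟨q, t, rfl⟩ := List.append_of_mem hc
        rcases q with _ | ⟨a, q⟩
        · simp at hhead
          exact Or.inl hhead
        · right
          have hpre : (a :: q) ++ [c] <+: (a :: q) ++ c :: t := ⟨t, by simp⟩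
          refine ⟨(a :: q) ++ [c], ⟨⟨hnd.sublist hpre.sublist, by simp, hch.prefix hpre⟩,
            ?_, ?_⟩⟩
          · simpa using hhead
          · show ((a :: q) ++ [c]).getLast? = some c
            exact List.getLast?_concat
      · right
        refine ⟨p ++ [c], ⟨⟨?_, ?_, ?_⟩, ?_, ?_⟩⟩
        · rw [List.nodup_append]
          refine ⟨hnd, by simp, ?_⟩
          intro x hx
          simp only [List.mem_singleton]
          rintro _ rfl rfl
          exact hc hx
        · simp; omega
        · unfold List.Chain'; rw [List.isChain_append]
          refine ⟨hch, by simp, ?_⟩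
          intro x hx y hy
          simp only [List.head?_cons, Option.mem_def, Option.some.injEq] at hy
          rw [hlast] at hx
          simp only [Option.mem_def, Option.some.injEq] at hx
          subst hx; subst hy
          exact hbc
        · rcases p with _ | ⟨x, xs⟩
          · simp at hlen
          · simpa using hhead
        · simp

theorem invariant2_optimal {V : Type*} [Fintype V] [DecidableEq V]
    {G : SimpleGraph V} (o : GraphOrientation G) (hinv : Invariant2 o) :
    ∀ o' : GraphOrientation G, o.maxOutDeg ≤ o'.maxOutDeg := by
  intro o'
  classical
  rcases Nat.eq_zero_or_pos o.maxOutDeg with h0 | hpos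
  · omega
  have hne : (Finset.univ : Finset V).Nonempty := by
    by_contra h
    rw [Finset.not_nonempty_iff_eq_empty] at h
    have : o.maxOutDeg = 0 := by simp [GraphOrientation.maxOutDeg, h]
    omega
  obtain ⟨m, -, hm⟩ := Finset.exists_mem_eq_sup Finset.univ hne o.outDeg
  have hmd : o.maxOutDeg = o.outDeg m := hm
  set S : Finset V :=
    Finset.univ.filter (fun v => Relation.ReflTransGen (fun a b => o.dir a b = true) m v)
    with hS
  have hmS : m ∈ S := by
    simp only [hS, Finset.mem_filter, Finset.mem_univ, true_and]
    exact Relation.ReflTransGen.refl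
  have hclosed : ∀ v ∈ S, ∀ w, o.dir v w = true → w ∈ S := by
    intro v hv w hw
    simp only [hS, Finset.mem_filter, Finset.mem_univ, true_and] at hv ⊢
    exact hv.tail hw
  have hlow : ∀ v ∈ S, o.maxOutDeg ≤ o.outDeg v + 1 := by
    intro v hv
    simp only [hS, Finset.mem_filter, Finset.mem_univ, true_and] at hv
    rcases reach_path o m v hv with rfl | ⟨p, hp⟩
    · omega
    · rw [hmd]
      exact hinv p m v hp hmd.symm
  have houtS : ∀ v ∈ S, o.outDeg v = (S.filter (fun w => o.dir v w = true)).card := by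
    intro v hv
    unfold GraphOrientation.outDeg outDegF
    congr 1
    ext w
    simp only [Finset.mem_filter, Finset.mem_univ, true_and]
    exact ⟨fun h => ⟨hclosed v hv w h, h⟩, fun h => h.2⟩
  have hsum : ∀ d : V → V → Bool,
      ((S ×ˢ S).filter fun p => d p.1 p.2 = true).card
        = ∑ v ∈ S, (S.filter fun w => d v w = true).card := by
    intro d
    rw [Finset.card_filter, Finset.sum_product]
    exact Finset.sum_congr rfl fun v _ => (Finset.card_filter _ _).symm
  have hcard : ((S ×ˢ S).filter fun p => o.dir p.1 p.2 = true).card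
      = ((S ×ˢ S).filter fun p => o'.dir p.1 p.2 = true).card := by
    apply Finset.card_bij'
      (i := fun p _ => if o'.dir p.1 p.2 = true then p else (p.2, p.1))
      (j := fun p _ => if o.dir p.1 p.2 = true then p else (p.2, p.1))
    · intro p hp
      simp only [Finset.mem_filter, Finset.mem_product] at hp ⊢
      obtain ⟨⟨h1, h2⟩, hd⟩ := hp
      have hadj := o.dir_adj _ _ hd
      by_cases h : o'.dir p.1 p.2 = true
      · simp [h, h1, h2]
      · have : o'.dir p.2 p.1 = true := by
          rcases (o'.exactly_one _ _ hadj.symm) with ⟨_, h2'⟩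
          exact h2' h
        simp [h, h1, h2, this]
    · intro p hp
      simp only [Finset.mem_filter, Finset.mem_product] at hp ⊢
      obtain ⟨⟨h1, h2⟩, hd⟩ := hp
      have hadj := o'.dir_adj _ _ hd
      by_cases h : o.dir p.1 p.2 = true
      · simp [h, h1, h2]
      · have : o.dir p.2 p.1 = true := by
          rcases (o.exactly_one _ _ hadj.symm) with ⟨_, h2'⟩
          exact h2' h
        simp [h, h1, h2, this]
    · intro p hp
      simp only [Finset.mem_filter, Finset.mem_product] at hp
      obtain ⟨⟨h1, h2⟩, hd⟩ := hp
      have hadj := o.dir_adj _ _ hd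
      have hnot : ¬ o.dir p.2 p.1 = true := ((o.exactly_one _ _ hadj).1 hd)
      by_cases h : o'.dir p.1 p.2 = true
      · simp [h, hd]
      · simp [h, hnot, hd]
    · intro p hp
      simp only [Finset.mem_filter, Finset.mem_product] at hp
      obtain ⟨⟨h1, h2⟩, hd⟩ := hp
      have hadj := o'.dir_adj _ _ hd
      have hnot : ¬ o'.dir p.2 p.1 = true := ((o'.exactly_one _ _ hadj).1 hd)
      by_cases h : o.dir p.1 p.2 = true
      · simp [h, hd]
      · simp [h, hnot, hd]
  have key : S.card * (o.maxOutDeg - 1) < S.card * o'.maxOutDeg := by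
    calc S.card * (o.maxOutDeg - 1) = ∑ _v ∈ S, (o.maxOutDeg - 1) := by
          rw [Finset.sum_const, smul_eq_mul]
      _ < ∑ v ∈ S, o.outDeg v := by
          apply Finset.sum_lt_sum
          · intro v hv
            have := hlow v hv
            omega
          · refine ⟨m, hmS, ?_⟩
            omega
      _ = ∑ v ∈ S, (S.filter fun w => o.dir v w = true).card :=
          Finset.sum_congr rfl houtS
      _ = ((S ×ˢ S).filter fun p => o.dir p.1 p.2 = true).card := (hsum _).symm
      _ = ((S ×ˢ S).filter fun p => o'.dir p.1 p.2 = true).card := hcard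
      _ = ∑ v ∈ S, (S.filter fun w => o'.dir v w = true).card := hsum _
      _ ≤ ∑ v ∈ S, o'.outDeg v := by
          apply Finset.sum_le_sum
          intro v hv
          apply Finset.card_le_card
          intro w hw
          simp only [Finset.mem_filter] at hw ⊢
          exact ⟨Finset.mem_univ _, hw.2⟩
      _ ≤ ∑ _v ∈ S, o'.maxOutDeg := by
          apply Finset.sum_le_sum
          intro v _
          exact Finset.le_sup (Finset.mem_univ v)
      _ = S.card * o'.maxOutDeg := by rw [Finset.sum_const, smul_eq_mul]
  have : o.maxOutDeg - 1 < o'.maxOutDeg := lt_of_mul_lt_mul_left key (Nat.zero_le _)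
  omega
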